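/- Packet-length converse ingredient: if C ⊆ F_q^{n×m} satisfies |C| ≥ q^{mμ} and every two distinct elements X, Y ∈ C satisfy rank(X − Y) ≥ n − μ + 1, where 0 < μ < n, then m ≥ n. -/

import Mathlib

/-- If all columns of `D` with index `< k` are zero, then `D.rank ≤ m - k`. -/
lemma rank_le_of_cols_zero {F : Type*} [Field F] {n m k : ℕ}
    (D : Matrix (Fin n) (Fin m) F)
    (h : ∀ (i : Fin n) (j : Fin m), (j : ℕ) < k → D i j = 0) : D.rank ≤ m - k := by
  set e : Fin (m - k) → Fin m := fun i => ⟨k + i, by omega⟩ with he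
  have einj : Function.Injective e := by
    intro a b hab
    have := congrArg Fin.val hab
    simp only [he] at this
    exact Fin.ext (by omega)
  set D₁ : Matrix (Fin n) (Fin (m - k)) F := D.submatrix id e with hD₁
  set P : Matrix (Fin (m - k)) (Fin m) F :=
    Matrix.of fun i j => if e i = j then 1 else 0 with hP
  have hDeq : D = D₁ * P := by
    ext a j
    rw [Matrix.mul_apply]
    by_cases hj : (j : ℕ) < k
    · rw [h a j hj]
      refine (Finset.sum_eq_zero ?_).symm
      intro i _
      have : e i ≠ j := by
        intro hc
        have : (e i : ℕ) = (j : ℕ) := by rw [hc]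
        simp only [he] at this
        omega
      simp [hD₁, hP, this]
    · push_neg at hj
      have hjm : (j : ℕ) - k < m - k := by omega
      set i₀ : Fin (m - k) := ⟨(j : ℕ) - k, hjm⟩ with hi₀
      have hei₀ : e i₀ = j := by
        apply Fin.ext
        simp only [he, hi₀]
        omega
      rw [Finset.sum_eq_single i₀]
      · simp [hD₁, hP, hei₀]
      · intro b _ hb
        have : e b ≠ j := fun hc => hb (einj (hc.trans hei₀.symm))
        simp [hP, this]
      · intro hcon
        exact absurd (Finset.mem_univ i₀) hcon
  calc D.rank = (D₁ * P).rank := by rw [hDeq]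
    _ ≤ D₁.rank := Matrix.rank_mul_le_left _ _
    _ ≤ m - k := Matrix.rank_le_width D₁

/-- Packet-length converse ingredient: if `C ⊆ F_q^{n×m}` has at least `q^{mμ}`
elements and minimum rank distance at least `n - μ + 1`, with `0 < μ < n` and
`0 < m`, then `m ≥ n`. -/
theorem packet_length_converse {F : Type*} [Field F] [Fintype F]
    {n m μ : ℕ} (hm : 0 < m) (hμ0 : 0 < μ) (hμn : μ < n)
    (C : Finset (Matrix (Fin n) (Fin m) F))
    (hcard : Fintype.card F ^ (m * μ) ≤ C.card)
    (hdist : ∀ X ∈ C, ∀ Y ∈ C, X ≠ Y → n - μ + 1 ≤ (X - Y).rank) :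
    n ≤ m := by
  by_contra hmn
  push_neg at hmn
  -- k : number of kept columns
  set k : ℕ := m - (n - μ) with hk
  -- projection to first k columns
  set Φ : Matrix (Fin n) (Fin m) F → Matrix (Fin n) (Fin k) F :=
    fun X => Matrix.of fun i j => X i ⟨(j : ℕ), by omega⟩ with hΦ
  have hinj : Set.InjOn Φ C := by
    intro X hX Y hY hXY
    by_contra hne
    have hrk := hdist X hX Y hY hne
    have hzero : ∀ (i : Fin n) (j : Fin m), (j : ℕ) < k → (X - Y) i j = 0 := by
      intro i j hj
      have := congrFun (congrFun hXY i) ⟨(j : ℕ), hj⟩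
      simp only [hΦ, Matrix.of_apply] at this
      simp [Matrix.sub_apply, this]
    have := rank_le_of_cols_zero (X - Y) hzero
    omega
  have hle : C.card ≤ Fintype.card F ^ (n * k) := by
    calc C.card ≤ Fintype.card (Matrix (Fin n) (Fin k) F) :=
          Finset.card_le_card_of_injOn Φ (fun _ _ => Finset.mem_univ _) hinj
      _ = Fintype.card F ^ (n * k) := by
          rw [← Fintype.card_congr (Matrix.of : (Fin n → Fin k → F) ≃ _), Fintype.card_fun, Fintype.card_fun]
          rw [Fintype.card_fin, Fintype.card_fin, ← pow_mul, Nat.mul_comm]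
  have hq : 2 ≤ Fintype.card F := Fintype.one_lt_card
  have hexp : n * k < m * μ := by
    have hs : n - μ + μ = n := Nat.sub_add_cancel hμn.le
    set s := n - μ with hsdef
    rcases Nat.lt_or_ge s m with h1 | h1
    · have ht : k + s = m := Nat.sub_add_cancel h1.le
      have htμ : k < μ := by omega
      have hspos : 1 ≤ s := by omega
      have h2 : s * k < s * μ := by nlinarith
      calc n * k = s * k + μ * k := by rw [← hs]; ring
        _ < s * μ + μ * k := by linarith
        _ ≤ m * μ := by rw [← ht]; nlinarith
    · have hk0 : k = 0 := by omega
      rw [hk0]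
      simpa using Nat.mul_pos hm hμ0
  have h3 : Fintype.card F ^ (m * μ) ≤ Fintype.card F ^ (n * k) := hcard.trans hle
  have h4 : Fintype.card F ^ (n * k) < Fintype.card F ^ (m * μ) :=
    Nat.pow_lt_pow_right (by omega) hexp
  omega
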